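/- Weighted maximum-principle comparison: let Ω ⊂ ℝ^{N+l} be an unbounded domain contained in {d(z,0) > R₀}, 0 < b < N_γ − 2, and let ω satisfy −Δ_γ ω + c(z) ω ≤ 0 in Ω, ω ≤ 0 on ∂Ω, where c(z) > −b(N_γ−2−b)|x|^{2γ} / ((1+γ)² d(z,0)^{2+2γ}) for d(z,0) ≥ R₀, and ω(z) d(z,0)^b → 0 as d(z,0) → ∞. Then ω ≤ 0 in Ω. -/

import Mathlib

set_option maxHeartbeats 1000000
set_option synthInstance.maxHeartbeats 200000


open MeasureTheory Filter Topology Asymptotics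

abbrev GSp (N l : ℕ) := (Fin N → ℝ) × (Fin l → ℝ)

/-- Euclidean norm on `Fin n → ℝ`. -/
noncomputable def xnorm {n : ℕ} (x : Fin n → ℝ) : ℝ := Real.sqrt (∑ i, x i ^ 2)

/-- The Grushin (quasi-)distance to the origin. -/
noncomputable def gdist {N l : ℕ} (γ : ℝ) (z : GSp N l) : ℝ :=
  ((1 / (1 + γ) ^ 2) * xnorm z.1 ^ (2 + 2 * γ) + xnorm z.2 ^ 2) ^ (1 / (2 + 2 * γ))

/-- Second derivative of `u` at `z` in direction `v`. -/
noncomputable def deriv2 {N l : ℕ} (u : GSp N l → ℝ) (z v : GSp N l) : ℝ :=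
  iteratedFDeriv ℝ 2 u z ![v, v]

/-- The Grushin operator `Δ_γ u = Δ_x u + |x|^{2γ} Δ_y u`. -/
noncomputable def grushin {N l : ℕ} (γ : ℝ) (u : GSp N l → ℝ) (z : GSp N l) : ℝ :=
  (∑ i, deriv2 u z (Pi.single i 1, 0)) +
    xnorm z.1 ^ (2 * γ) * ∑ j, deriv2 u z (0, Pi.single j 1)

/-- The homogeneous dimension `N_γ = N + (1+γ)l`. -/
noncomputable def Ngamma (N l : ℕ) (γ : ℝ) : ℝ := N + (1 + γ) * l

/-- The Grushin Kelvin inversion `z ↦ (d(z,0)^{-2} x, d(z,0)^{-2-2γ} y)`. -/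
noncomputable def kelvin {N l : ℕ} (γ : ℝ) (z : GSp N l) : GSp N l :=
  (gdist γ z ^ (-2 : ℝ) • z.1, gdist γ z ^ (-(2 + 2 * γ)) • z.2)

/-- Membership in the weighted Sobolev space `H^{1,2}_γ` over a set `S`. -/
def MemHgammaOn {N l : ℕ} (γ : ℝ) (u : GSp N l → ℝ) (S : Set (GSp N l)) : Prop :=
  MemLp u 2 (volume.restrict S) ∧
  (∀ i : Fin N, MemLp (fun z => fderiv ℝ u z (Pi.single i 1, 0)) 2 (volume.restrict S)) ∧
  (∀ j : Fin l, MemLp (fun z => xnorm z.1 ^ γ * fderiv ℝ u z (0, Pi.single j 1)) 2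
    (volume.restrict S))

/-- Membership in the weighted Sobolev space `H^{1,2}_γ(ℝ^{N+l})`. -/
def MemHgamma {N l : ℕ} (γ : ℝ) (u : GSp N l → ℝ) : Prop :=
  MemHgammaOn γ u Set.univ

lemma secondDeriv_nonpos_of_isLocalMax {g g' : ℝ → ℝ} {a : ℝ}
    (hmax : IsLocalMax g 0)
    (hd : ∀ᶠ t in 𝓝 (0:ℝ), HasDerivAt g (g' t) t)
    (hd2 : HasDerivAt g' a 0) : a ≤ 0 := by
  by_contra hcon
  push_neg at hcon
  have h0 : g' 0 = 0 := by
    have h1 := hmax.deriv_eq_zero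
    rwa [hd.self_of_nhds.deriv] at h1
  have hslope : Tendsto (fun t => g' t / t) (𝓝[≠] (0:ℝ)) (𝓝 a) := by
    have h2 := hasDerivAt_iff_tendsto_slope.mp hd2
    simpa [slope_fun_def, h0, div_eq_inv_mul] using h2
  have hev : ∀ᶠ t in 𝓝[≠] (0:ℝ), a / 2 < g' t / t :=
    hslope.eventually (eventually_gt_nhds (half_lt_self hcon))
  -- extract δ
  obtain ⟨δ₁, hδ₁, h₁⟩ := Metric.mem_nhdsWithin_iff.mp hev
  obtain ⟨δ₂, hδ₂, h₂⟩ := Metric.eventually_nhds_iff.mp hd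
  obtain ⟨δ₃, hδ₃, h₃⟩ := Metric.eventually_nhds_iff.mp hmax
  set δ := min δ₁ (min δ₂ δ₃) with hδdef
  have hδ : 0 < δ := by positivity
  have hpos : ∀ t ∈ Set.Ioo (0:ℝ) δ, 0 < g' t := by
    intro t ht
    have hne : t ≠ 0 := ne_of_gt ht.1
    have habs : dist t 0 < δ₁ := by
      rw [Real.dist_eq, sub_zero, abs_of_pos ht.1]
      exact lt_of_lt_of_le ht.2 (le_trans (min_le_left _ _) le_rfl)
    have := h₁ ⟨Metric.mem_ball.mpr habs, hne⟩
    have ha2 : 0 < a / 2 := by linarith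
    have := lt_trans ha2 this
    exact (div_pos_iff.mp this).resolve_right (fun h => absurd ht.1 (not_lt.mpr (le_of_lt h.2))) |>.1
  have hmono : StrictMonoOn g (Set.Icc 0 (δ/2)) := by
    apply strictMonoOn_of_deriv_pos (convex_Icc _ _)
    · intro t ht
      have : dist t 0 < δ₂ := by
        rw [Real.dist_eq, sub_zero, abs_of_nonneg ht.1]
        calc t ≤ δ/2 := ht.2
        _ < δ := by linarith
        _ ≤ δ₂ := le_trans (min_le_right _ _) (min_le_left _ _)
      exact ((h₂ this).differentiableAt.continuousAt).continuousWithinAt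
    · intro t ht
      rw [interior_Icc] at ht
      have hd' : dist t 0 < δ₂ := by
        rw [Real.dist_eq, sub_zero, abs_of_pos ht.1]
        calc t < δ/2 := ht.2
        _ < δ := by linarith
        _ ≤ δ₂ := le_trans (min_le_right _ _) (min_le_left _ _)
      rw [(h₂ hd').deriv]
      exact hpos t ⟨ht.1, by
        calc t < δ/2 := ht.2
        _ < δ := by linarith⟩
  have hlt : g 0 < g (δ/2) := by
    apply hmono (Set.left_mem_Icc.mpr (by positivity)) (Set.right_mem_Icc.mpr (by positivity))
    positivity
  have : g (δ/2) ≤ g 0 := by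
    apply h₃
    rw [Real.dist_eq, sub_zero, abs_of_pos (by positivity)]
    calc δ/2 < δ := by linarith
    _ ≤ δ₃ := le_trans (min_le_right _ _) (min_le_right _ _)
  linarith


lemma hessian_nonpos_of_isLocalMax {E : Type*} [NormedAddCommGroup E] [NormedSpace ℝ E]
    {f : E → ℝ} {F : E → (E →L[ℝ] ℝ)} {F₂ : E →L[ℝ] E →L[ℝ] ℝ} {z₀ : E} (v : E)
    (hmax : IsLocalMax f z₀)
    (hd : ∀ᶠ z in 𝓝 z₀, HasFDerivAt f (F z) z)
    (hd2 : HasFDerivAt F F₂ z₀) : F₂ v v ≤ 0 := by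
  set L : ℝ → E := fun t => z₀ + t • v with hLdef
  have hL0 : L 0 = z₀ := by simp [hLdef]
  have hLd : ∀ t, HasDerivAt L v t := by
    intro t
    simpa [hLdef] using ((hasDerivAt_id t).smul_const v).const_add z₀
  have hLc : Tendsto L (𝓝 0) (𝓝 z₀) := by
    have := (hLd 0).continuousAt
    rwa [ContinuousAt, hL0] at this
  apply secondDeriv_nonpos_of_isLocalMax (g := f ∘ L) (g' := fun t => F (L t) v)
  · have h1 : ∀ᶠ t in 𝓝 (0:ℝ), f (L t) ≤ f z₀ := hLc.eventually hmax
    have : (f ∘ L) 0 = f z₀ := by rw [Function.comp_apply, hL0]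
    rw [IsLocalMax, IsMaxFilter, this]
    exact h1
  · have h1 : ∀ᶠ t in 𝓝 (0:ℝ), HasFDerivAt f (F (L t)) (L t) := hLc.eventually hd
    filter_upwards [h1] with t ht
    exact ht.comp_hasDerivAt t (hLd t)
  · have hd2' : HasFDerivAt F F₂ (L 0) := hL0 ▸ hd2
    have h1 : HasDerivAt (fun t => F (L t)) (F₂ v) 0 := hd2'.comp_hasDerivAt 0 (hLd 0)
    have h2 := ((ContinuousLinearMap.apply ℝ ℝ v).hasFDerivAt).comp_hasDerivAt 0 h1
    exact h2


namespace MPaux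
variable {N l : ℕ}

noncomputable def sfun (z : GSp N l) : ℝ := ∑ i, z.1 i ^ 2
noncomputable def tfun (z : GSp N l) : ℝ := ∑ j, z.2 j ^ 2
noncomputable def rho (γ : ℝ) (z : GSp N l) : ℝ := (1/(1+γ)^2) * sfun z ^ (1+γ) + tfun z

variable {γ b : ℝ}

lemma sfun_nonneg (z : GSp N l) : 0 ≤ sfun z :=
  Finset.sum_nonneg fun i _ => sq_nonneg _
lemma tfun_nonneg (z : GSp N l) : 0 ≤ tfun z :=
  Finset.sum_nonneg fun i _ => sq_nonneg _

lemma xnorm_rpow {n : ℕ} (x : Fin n → ℝ) (e : ℝ) : xnorm x ^ (2 * e) = (∑ i, x i ^ 2) ^ e := by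
  have h : (0:ℝ) ≤ ∑ i, x i ^ 2 := Finset.sum_nonneg fun i _ => sq_nonneg _
  rw [xnorm, Real.sqrt_eq_rpow, ← Real.rpow_mul h]
  congr 1
  ring

lemma xnorm_sq {n : ℕ} (x : Fin n → ℝ) : xnorm x ^ (2:ℕ) = ∑ i, x i ^ 2 := by
  rw [xnorm, Real.sq_sqrt (Finset.sum_nonneg fun i _ => sq_nonneg _)]

variable {γ b : ℝ}

lemma rho_eq (hγ : 0 < γ) (z : GSp N l) :
    rho γ z = (1 / (1 + γ) ^ 2) * xnorm z.1 ^ (2 + 2 * γ) + xnorm z.2 ^ 2 := by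
  have h1 : (2:ℝ) + 2*γ = 2 * (1+γ) := by ring
  rw [rho, h1, xnorm_rpow, xnorm_sq, sfun, tfun]

lemma gdist_eq (hγ : 0 < γ) (z : GSp N l) : gdist γ z = rho γ z ^ (1/(2+2*γ)) := by
  rw [gdist, rho_eq hγ]

lemma rho_nonneg (hγ : 0 < γ) (z : GSp N l) : 0 ≤ rho γ z := by
  have h1 : (0:ℝ) ≤ sfun z ^ (1+γ) := Real.rpow_nonneg (sfun_nonneg z) _
  have h2 := tfun_nonneg z
  have h3 : (0:ℝ) < (1+γ)^2 := by positivity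
  have h4 : (0:ℝ) ≤ 1/(1+γ)^2 := by positivity
  rw [rho]
  nlinarith

lemma gdist_nonneg (hγ : 0 < γ) (z : GSp N l) : 0 ≤ gdist γ z := by
  rw [gdist_eq hγ]; exact Real.rpow_nonneg (rho_nonneg hγ z) _

lemma gdist_rpow (hγ : 0 < γ) (z : GSp N l) : gdist γ z ^ (2+2*γ) = rho γ z := by
  rw [gdist_eq hγ, ← Real.rpow_mul (rho_nonneg hγ z), one_div,
    inv_mul_cancel₀ (by positivity : (2+2*γ) ≠ 0), Real.rpow_one]

lemma rho_pos (hγ : 0 < γ) {z : GSp N l} (h : 0 < gdist γ z) : 0 < rho γ z := by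
  rw [← gdist_rpow hγ]; exact Real.rpow_pos_of_pos h _

lemma continuous_sfun : Continuous (sfun (N:=N) (l:=l)) := by
  unfold sfun; fun_prop

lemma continuous_tfun : Continuous (tfun (N:=N) (l:=l)) := by
  unfold tfun; fun_prop

lemma continuous_rpow_const {e : ℝ} (he : 0 ≤ e) : Continuous (fun r : ℝ => r ^ e) :=
  continuous_iff_continuousAt.mpr fun x => Real.continuousAt_rpow_const x e (Or.inr he)

lemma continuous_rho (hγ : 0 < γ) : Continuous (rho γ (N:=N) (l:=l)) := by
  unfold rho
  exact (continuous_const.mul ((continuous_rpow_const (by positivity)).comp continuous_sfun)).add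
    continuous_tfun

lemma continuous_gdist (hγ : 0 < γ) : Continuous (gdist γ (N:=N) (l:=l)) := by
  have : gdist γ (N:=N) (l:=l) = fun z => rho γ z ^ (1/(2+2*γ)) := funext (gdist_eq hγ)
  rw [this]
  exact (continuous_rpow_const (by positivity)).comp (continuous_rho hγ)



noncomputable def P1 (i : Fin N) : GSp N l →L[ℝ] ℝ :=
  (ContinuousLinearMap.proj i).comp (ContinuousLinearMap.fst ℝ (Fin N → ℝ) (Fin l → ℝ))
noncomputable def P2 (j : Fin l) : GSp N l →L[ℝ] ℝ :=
  (ContinuousLinearMap.proj j).comp (ContinuousLinearMap.snd ℝ (Fin N → ℝ) (Fin l → ℝ))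

@[simp] lemma P1_apply (i : Fin N) (z : GSp N l) : P1 i z = z.1 i := rfl
@[simp] lemma P2_apply (j : Fin l) (z : GSp N l) : P2 j z = z.2 j := rfl

noncomputable def Bx : GSp N l →L[ℝ] GSp N l →L[ℝ] ℝ :=
  ∑ i, (P1 i).smulRight (P1 i)
noncomputable def By : GSp N l →L[ℝ] GSp N l →L[ℝ] ℝ :=
  ∑ j, (P2 j).smulRight (P2 j)

@[simp] lemma Bx_apply (z v : GSp N l) : Bx z v = ∑ i, z.1 i * v.1 i := by
  simp [Bx, ContinuousLinearMap.sum_apply]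

@[simp] lemma By_apply (z v : GSp N l) : By z v = ∑ j, z.2 j * v.2 j := by
  simp [By, ContinuousLinearMap.sum_apply]

/-- the direction vectors -/
def ex (i : Fin N) : GSp N l := (Pi.single i 1, 0)
def ey (j : Fin l) : GSp N l := (0, Pi.single j 1)

@[simp] lemma Bx_ex (z : GSp N l) (i : Fin N) : Bx z (ex i) = z.1 i := by
  simp [ex, Pi.single_apply, mul_ite, Finset.sum_ite_eq']

@[simp] lemma By_ex (z : GSp N l) (i : Fin N) : By z (ex i) = 0 := by
  simp [ex]

@[simp] lemma Bx_ey (z : GSp N l) (j : Fin l) : Bx z (ey j) = 0 := by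
  simp [ey]

@[simp] lemma By_ey (z : GSp N l) (j : Fin l) : By z (ey j) = z.2 j := by
  simp [ey, Pi.single_apply, mul_ite, Finset.sum_ite_eq']

lemma hasFDerivAt_sfun (z : GSp N l) : HasFDerivAt sfun ((2:ℝ) • (Bx z)) z := by
  have h : ∀ i : Fin N, HasFDerivAt (fun z : GSp N l => z.1 i ^ 2)
      ((2 * z.1 i) • (P1 i : GSp N l →L[ℝ] ℝ)) z := by
    intro i
    have hP := (P1 (l:=l) i).hasFDerivAt (x := z)
    have := hP.mul hP
    convert (config := {transparency := .default, preTransparency := .instances}) this using 1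
    · funext w; simp [sq]
    · refine ContinuousLinearMap.ext fun v => ?_
      simp
      ring
  have hsum := HasFDerivAt.sum (fun i (_ : i ∈ Finset.univ) => h i)
  convert (config := {transparency := .default, preTransparency := .instances}) hsum using 1
  funext w; simp [sfun, Finset.sum_apply]
  refine ContinuousLinearMap.ext fun v => ?_
  simp [Bx, ContinuousLinearMap.sum_apply, Finset.mul_sum]
  congr 1; funext i; ring

lemma hasFDerivAt_tfun (z : GSp N l) : HasFDerivAt tfun ((2:ℝ) • (By z)) z := by
  have h : ∀ j : Fin l, HasFDerivAt (fun z : GSp N l => z.2 j ^ 2)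
      ((2 * z.2 j) • (P2 j : GSp N l →L[ℝ] ℝ)) z := by
    intro j
    have hP := (P2 (N:=N) j).hasFDerivAt (x := z)
    have := hP.mul hP
    convert (config := {transparency := .default, preTransparency := .instances}) this using 1
    · funext w; simp [sq]
    · refine ContinuousLinearMap.ext fun v => ?_
      simp
      ring
  have hsum := HasFDerivAt.sum (fun j (_ : j ∈ Finset.univ) => h j)
  convert (config := {transparency := .default, preTransparency := .instances}) hsum using 1
  funext w; simp [tfun, Finset.sum_apply]
  refine ContinuousLinearMap.ext fun v => ?_
  simp [By, ContinuousLinearMap.sum_apply, Finset.mul_sum]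
  congr 1; funext j; ring

variable {γ b : ℝ}

lemma hasFDerivAt_rho (hγ : 0 < γ) (z : GSp N l) :
    HasFDerivAt (rho γ)
      ((2 * (1/(1+γ)^2) * (1+γ) * sfun z ^ γ) • Bx z + (2:ℝ) • By z) z := by
  have h1 : HasDerivAt (fun r : ℝ => r ^ (1+γ)) ((1+γ) * sfun z ^ γ) (sfun z) := by
    have := Real.hasDerivAt_rpow_const (x := sfun z) (p := 1+γ) (Or.inr (by linarith))
    convert this using 2
    ring_nf
  have h2 : HasFDerivAt (fun z : GSp N l => sfun z ^ (1+γ))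
      (((1+γ) * sfun z ^ γ) • ((2:ℝ) • Bx z)) z :=
    h1.comp_hasFDerivAt z (hasFDerivAt_sfun z)
  have h3 := (h2.const_mul (1/(1+γ)^2)).add (hasFDerivAt_tfun z)
  convert (config := {transparency := .default, preTransparency := .instances}) h3 using 1
  rfl
  refine ContinuousLinearMap.ext fun v => ?_
  simp [ContinuousLinearMap.smul_apply, ContinuousLinearMap.add_apply, Finset.mul_sum]
  exact Finset.sum_congr rfl fun i _ => by ring


/-- coefficient functions for the first derivative of `phi = rho ^ pp` with `pp = -(b/(2+2γ))`. -/
noncomputable def aa (γ b : ℝ) (z : GSp N l) : ℝ :=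
  (2 * (-(b/(2+2*γ))) * (1/(1+γ)^2) * (1+γ)) *
    (rho γ z ^ (-(b/(2+2*γ)) - 1) * sfun z ^ γ)

noncomputable def bb (γ b : ℝ) (z : GSp N l) : ℝ :=
  2 * (-(b/(2+2*γ))) * rho γ z ^ (-(b/(2+2*γ)) - 1)

noncomputable def Dphi (γ b : ℝ) (z : GSp N l) : GSp N l →L[ℝ] ℝ :=
  aa γ b z • Bx z + bb γ b z • By z

lemma hasFDerivAt_phi (hγ : 0 < γ) {z : GSp N l} (hz : 0 < rho γ z) :
    HasFDerivAt (fun z : GSp N l => rho γ z ^ (-(b/(2+2*γ)))) (Dphi γ b z) z := by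
  have h1 : HasDerivAt (fun r : ℝ => r ^ (-(b/(2+2*γ))))
      ((-(b/(2+2*γ))) * rho γ z ^ ((-(b/(2+2*γ))) - 1)) (rho γ z) :=
    Real.hasDerivAt_rpow_const (Or.inl (ne_of_gt hz))
  have h2 := h1.comp_hasFDerivAt z (hasFDerivAt_rho hγ z)
  convert (config := {transparency := .default, preTransparency := .instances}) h2 using 1
  rfl
  refine ContinuousLinearMap.ext fun v => ?_
  simp [Dphi, aa, bb, ContinuousLinearMap.smul_apply, ContinuousLinearMap.add_apply,
    Finset.mul_sum, mul_add]
  simp only [← Finset.sum_neg_distrib]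
  congr 1
  · exact Finset.sum_congr rfl fun i _ => by ring
  · exact Finset.sum_congr rfl fun j _ => by ring


lemma key_algebra (NN ll : ℝ) (γ b s t u w ρ : ℝ) (hγ : 0 < γ) (hs : 0 < s)
    (hρ : ρ = (1/(1+γ)^2) * (s*u) + t) :
    let A := 1/(1+γ)^2
    let pp := -(b/(2+2*γ))
    let e := pp - 1
    let Ca := 2*pp*A*(1+γ)
    let cc := 2*A*(1+γ)*u
    NN * (Ca * ((w*ρ) * u)) + (Ca * ((w*ρ) * (γ * (u/s) * 2) + u * (e * w * cc))) * s
      + u * (ll * (2*pp*(w*ρ)) + (4*pp*e*w) * t)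
    = -(b * (NN + (1+γ)*ll - 2 - b) * A) * u * (w * ρ) := by
  intro A pp e Ca cc
  have h1 : (1:ℝ)+γ ≠ 0 := by positivity
  have h2 : (2:ℝ)+2*γ ≠ 0 := by positivity
  subst hρ
  simp only [A, pp, e, Ca, cc]
  field_simp
  ring

lemma exists_D2_spos (hγ : 0 < γ) {z₀ : GSp N l} (hz : 0 < rho γ z₀) (hs : 0 < sfun z₀) :
    ∃ D2 : GSp N l →L[ℝ] GSp N l →L[ℝ] ℝ,
      HasFDerivAt (Dphi γ b (N:=N) (l:=l)) D2 z₀ ∧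
      (∑ i, D2 (ex i) (ex i)) + sfun z₀ ^ γ * ∑ j, D2 (ey j) (ey j)
        = -(b * ((N + (1+γ)*l : ℝ) - 2 - b) * (1/(1+γ)^2)) * sfun z₀ ^ γ
          * rho γ z₀ ^ (-(b/(2+2*γ)) - 1) := by
  have h1γ : (0:ℝ) < 1 + γ := by linarith
  set A : ℝ := 1/(1+γ)^2 with hA
  set pp : ℝ := -(b/(2+2*γ)) with hpp
  set e : ℝ := pp - 1 with he
  set Ca : ℝ := 2*pp*A*(1+γ) with hCa
  set s₀ : ℝ := sfun z₀ with hs₀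
  set t₀ : ℝ := tfun z₀ with ht₀
  set ρ₀ : ℝ := rho γ z₀ with hρ₀
  set Lr : GSp N l →L[ℝ] ℝ := (2*A*(1+γ)* s₀ ^ γ) • Bx z₀ + (2:ℝ) • By z₀ with hLr
  have hρd : HasFDerivAt (rho γ) Lr z₀ := hasFDerivAt_rho hγ z₀
  -- derivative of ρ^e
  have hρe : HasFDerivAt (fun z : GSp N l => rho γ z ^ e) ((e * ρ₀ ^ (e-1)) • Lr) z₀ :=
    by have h := (Real.hasDerivAt_rpow_const (x := ρ₀) (p := e) (Or.inl (ne_of_gt hz))).comp_hasFDerivAt z₀ hρd; exact h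
  -- derivative of s^γ
  have hsγ : HasFDerivAt (fun z : GSp N l => sfun z ^ γ)
      ((γ * s₀ ^ (γ-1)) • ((2:ℝ) • Bx z₀)) z₀ :=
    by have h := (Real.hasDerivAt_rpow_const (x := s₀) (p := γ) (Or.inl (ne_of_gt hs))).comp_hasFDerivAt z₀ (hasFDerivAt_sfun z₀); exact h
  -- derivative of aa
  have haa : HasFDerivAt (aa γ b)
      (Ca • (ρ₀ ^ e • ((γ * s₀ ^ (γ-1)) • ((2:ℝ) • Bx z₀)) + s₀ ^ γ • ((e * ρ₀ ^ (e-1)) • Lr)))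
      z₀ := by
    have := (hρe.mul hsγ).const_mul Ca
    convert (config := {transparency := .default, preTransparency := .instances}) this using 1
    rfl
  -- derivative of bb
  have hbb : HasFDerivAt (bb γ b) ((2*pp) • ((e * ρ₀ ^ (e-1)) • Lr)) z₀ := by
    have := hρe.const_mul (2*pp)
    convert (config := {transparency := .default, preTransparency := .instances}) this using 1
    rfl
  set Daa : GSp N l →L[ℝ] ℝ :=
    Ca • (ρ₀ ^ e • ((γ * s₀ ^ (γ-1)) • ((2:ℝ) • Bx z₀)) + s₀ ^ γ • ((e * ρ₀ ^ (e-1)) • Lr))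
    with hDaa
  set Dbb : GSp N l →L[ℝ] ℝ := (2*pp) • ((e * ρ₀ ^ (e-1)) • Lr) with hDbb
  set D2 : GSp N l →L[ℝ] GSp N l →L[ℝ] ℝ :=
    (aa γ b z₀ • Bx + Daa.smulRight (Bx z₀)) + (bb γ b z₀ • By + Dbb.smulRight (By z₀))
    with hD2
  refine ⟨D2, ?_, ?_⟩
  · have h1 : HasFDerivAt (fun z : GSp N l => aa γ b z • Bx z)
        (aa γ b z₀ • Bx + Daa.smulRight (Bx z₀)) z₀ := by
      have := haa.smul (Bx (N:=N) (l:=l)).hasFDerivAt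
      convert (config := {transparency := .default, preTransparency := .instances}) this using 1
    have h2 : HasFDerivAt (fun z : GSp N l => bb γ b z • By z)
        (bb γ b z₀ • By + Dbb.smulRight (By z₀)) z₀ := by
      have := hbb.smul (By (N:=N) (l:=l)).hasFDerivAt
      convert (config := {transparency := .default, preTransparency := .instances}) this using 1
    exact h1.add h2
  · have hDi : ∀ i : Fin N, D2 (ex i) (ex i) =
        aa γ b z₀ + (Ca * (ρ₀ ^ e * (γ * s₀ ^ (γ-1) * 2) + s₀ ^ γ * (e * ρ₀ ^ (e-1)
          * (2*A*(1+γ)* s₀ ^ γ)))) * (z₀.1 i)^2 := by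
      intro i
      simp [hD2, hDaa, hDbb, hLr, ContinuousLinearMap.add_apply,
        ContinuousLinearMap.smul_apply, ContinuousLinearMap.smulRight_apply,
        ex, Pi.single_apply, mul_ite, Finset.sum_ite_eq', sq]
      ring
    have hDj : ∀ j : Fin l, D2 (ey j) (ey j) =
        bb γ b z₀ + (2*pp * (e * ρ₀ ^ (e-1)) * 2) * (z₀.2 j)^2 := by
      intro j
      simp [hD2, hDaa, hDbb, hLr, ContinuousLinearMap.add_apply,
        ContinuousLinearMap.smul_apply, ContinuousLinearMap.smulRight_apply,
        ey, Pi.single_apply, mul_ite, Finset.sum_ite_eq', sq]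
      ring
    rw [Finset.sum_congr rfl (fun i _ => hDi i), Finset.sum_congr rfl (fun j _ => hDj j)]
    rw [Finset.sum_add_distrib, Finset.sum_add_distrib, Finset.sum_const, Finset.sum_const,
      ← Finset.mul_sum, ← Finset.mul_sum]
    have hsums : ∑ i, (z₀.1 i)^2 = s₀ := rfl
    have hsumt : ∑ j, (z₀.2 j)^2 = t₀ := rfl
    rw [hsums, hsumt]
    -- now pure scalar algebra using rpow identities
    have hsm1 : s₀ ^ (γ - 1) = s₀ ^ γ / s₀ := by
      rw [← Real.rpow_sub_one (ne_of_gt hs)]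
    have hrr : ρ₀ ^ e = ρ₀ ^ (e-1) * ρ₀ := by
      rw [← Real.rpow_add_one (ne_of_gt hz), sub_add_cancel]
    have hρ_eq : ρ₀ = A * (s₀ * s₀ ^ γ) + t₀ := by
      rw [hρ₀, rho, ← hs₀, ← ht₀, ← hA]
      congr 2
      rw [Real.rpow_add hs, Real.rpow_one]
    have hρ_eq' : ρ₀ = (1/(1+γ)^2) * (s₀ * s₀ ^ γ) + t₀ := by rw [hρ_eq, hA]
    have hkey := key_algebra (N:ℝ) (l:ℝ) γ b s₀ t₀ (s₀ ^ γ) (ρ₀ ^ (e-1)) ρ₀ hγ hs hρ_eq'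
    simp only at hkey
    have haa0 : aa γ b z₀ = Ca * (ρ₀ ^ e * s₀ ^ γ) := by
      rw [aa, hCa, hA, hpp, ← hρ₀, ← hs₀, ← he]
    have hbb0 : bb γ b z₀ = 2*pp*ρ₀ ^ e := by
      rw [bb, hpp, ← hρ₀, ← he]
    rw [haa0, hbb0, hsm1, hrr]
    simp only [nsmul_eq_mul, Finset.card_univ, Fintype.card_fin]
    linear_combination hkey


lemma norm_Bx_le (z₀ z : GSp N l) (hx : ∀ i, z₀.1 i = 0) : ‖Bx z‖ ≤ N * ‖z - z₀‖ := by
  apply ContinuousLinearMap.opNorm_le_bound _ (by positivity)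
  intro v
  rw [Bx_apply]
  calc ‖∑ i, z.1 i * v.1 i‖ ≤ ∑ i, ‖z.1 i * v.1 i‖ := norm_sum_le _ _
  _ ≤ ∑ i : Fin N, ‖z - z₀‖ * ‖v‖ := by
      apply Finset.sum_le_sum
      intro i _
      rw [norm_mul]
      apply mul_le_mul _ _ (norm_nonneg _) (norm_nonneg _)
      · have h1 : z.1 i = (z - z₀).1 i := by rw [Prod.fst_sub, Pi.sub_apply, hx i, sub_zero]
        rw [h1]
        calc ‖(z - z₀).1 i‖ ≤ ‖(z - z₀).1‖ := norm_le_pi_norm _ i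
        _ ≤ ‖z - z₀‖ := norm_fst_le _
      · calc ‖v.1 i‖ ≤ ‖v.1‖ := norm_le_pi_norm _ i
        _ ≤ ‖v‖ := norm_fst_le _
  _ = N * ‖z - z₀‖ * ‖v‖ := by
      rw [Finset.sum_const, Finset.card_univ, Fintype.card_fin, nsmul_eq_mul]
      ring

lemma exists_D2_szero (hγ : 0 < γ) {z₀ : GSp N l} (hz : 0 < rho γ z₀) (hs : sfun z₀ = 0) :
    ∃ D2 : GSp N l →L[ℝ] GSp N l →L[ℝ] ℝ,
      HasFDerivAt (Dphi γ b (N:=N) (l:=l)) D2 z₀ ∧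
      (∑ i, D2 (ex i) (ex i)) + sfun z₀ ^ γ * ∑ j, D2 (ey j) (ey j)
        = -(b * ((N + (1+γ)*l : ℝ) - 2 - b) * (1/(1+γ)^2)) * sfun z₀ ^ γ
          * rho γ z₀ ^ (-(b/(2+2*γ)) - 1) := by
  have h1γ : (0:ℝ) < 1 + γ := by linarith
  have hx : ∀ i, z₀.1 i = 0 := by
    intro i
    have h2 : (z₀.1 i)^2 ≤ sfun z₀ :=
      Finset.single_le_sum (f := fun i => (z₀.1 i)^2) (fun i _ => sq_nonneg _) (Finset.mem_univ i)
    nlinarith [sq_nonneg (z₀.1 i)]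
  have hsγ0 : sfun z₀ ^ γ = 0 := by rw [hs, Real.zero_rpow (ne_of_gt hγ)]
  set pp : ℝ := -(b/(2+2*γ)) with hpp
  set e : ℝ := pp - 1 with he
  set Ca : ℝ := 2*pp*(1/(1+γ)^2)*(1+γ) with hCa
  set Lr : GSp N l →L[ℝ] ℝ :=
    (2*(1/(1+γ)^2)*(1+γ)* sfun z₀ ^ γ) • Bx z₀ + (2:ℝ) • By z₀ with hLr
  have hρd : HasFDerivAt (rho γ) Lr z₀ := hasFDerivAt_rho hγ z₀
  have hρe : HasFDerivAt (fun z : GSp N l => rho γ z ^ e) ((e * rho γ z₀ ^ (e-1)) • Lr) z₀ :=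
    (Real.hasDerivAt_rpow_const (Or.inl (ne_of_gt hz))).comp_hasFDerivAt z₀ hρd
  have hbb : HasFDerivAt (bb γ b) ((2*pp) • ((e * rho γ z₀ ^ (e-1)) • Lr)) z₀ := by
    have := hρe.const_mul (2*pp)
    convert (config := {transparency := .default, preTransparency := .instances}) this using 1
    rfl
  set Dbb : GSp N l →L[ℝ] ℝ := (2*pp) • ((e * rho γ z₀ ^ (e-1)) • Lr) with hDbb
  -- the `aa`-part has derivative 0 at points with x₀ = 0
  have hA : HasFDerivAt (fun z : GSp N l => aa γ b z • Bx z)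
      (0 : GSp N l →L[ℝ] GSp N l →L[ℝ] ℝ) z₀ := by
    rw [hasFDerivAt_iff_isLittleO_nhds_zero, Asymptotics.isLittleO_iff]
    have haaz₀ : aa γ b z₀ = 0 := by rw [aa, hsγ0]; ring
    have hBxz₀ : Bx z₀ = (0 : GSp N l →L[ℝ] ℝ) := by
      refine ContinuousLinearMap.ext fun v => ?_
      simp [hx]
    intro c hc
    -- the controlling function
    set h : GSp N l → ℝ := fun z => |Ca| * rho γ z ^ e * sfun z ^ γ * N with hh
    have hcont : ContinuousAt h z₀ := by
      apply ContinuousAt.mul _ continuousAt_const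
      apply ContinuousAt.mul
      · exact continuousAt_const.mul
          ((Real.continuousAt_rpow_const _ _ (Or.inl (ne_of_gt hz))).comp
            (continuous_rho hγ).continuousAt)
      · exact (continuous_rpow_const (le_of_lt hγ)).continuousAt.comp
          continuous_sfun.continuousAt
    have hh0 : h z₀ = 0 := by rw [hh]; simp [hsγ0]
    have hev : ∀ᶠ z in 𝓝 z₀, h z ≤ c := by
      have := hcont.tendsto
      rw [hh0] at this
      exact this.eventually_le_const hc
    have htr : Tendsto (fun w : GSp N l => z₀ + w) (𝓝 0) (𝓝 z₀) := by
      have hcont2 : Continuous (fun w : GSp N l => z₀ + w) := continuous_const.add continuous_id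
      have := hcont2.tendsto (0 : GSp N l)
      simpa using this
    have hev' : ∀ᶠ w in 𝓝 (0 : GSp N l), h (z₀ + w) ≤ c := htr.eventually hev
    filter_upwards [hev'] with w hz'
    rw [haaz₀, hBxz₀]
    simp only [zero_smul, sub_zero, ContinuousLinearMap.zero_apply]
    set z : GSp N l := z₀ + w with hzdef
    have hzz : z - z₀ = w := by rw [hzdef]; abel
    have hb1 : ‖aa γ b z • Bx z‖ ≤ h z * ‖w‖ := by
      rw [norm_smul (aa γ b z) (Bx z)]
      have h2 : ‖aa γ b z‖ ≤ |Ca| * rho γ z ^ e * sfun z ^ γ := by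
        have e1 : aa γ b z = Ca * (rho γ z ^ e * sfun z ^ γ) := by
          rw [hCa, hpp, he, hpp, aa]
        rw [e1, Real.norm_eq_abs, abs_mul,
          abs_of_nonneg (mul_nonneg (Real.rpow_nonneg (rho_nonneg hγ z) _)
            (Real.rpow_nonneg (sfun_nonneg z) _))]
        exact le_of_eq (by ring)
      have h3 : ‖Bx z‖ ≤ N * ‖w‖ := by
        have := norm_Bx_le z₀ z hx
        rwa [hzz] at this
      have h4 : (0:ℝ) ≤ |Ca| * rho γ z ^ e * sfun z ^ γ := by
        have := Real.rpow_nonneg (rho_nonneg hγ z) e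
        have := Real.rpow_nonneg (sfun_nonneg z) γ
        positivity
      calc ‖aa γ b z‖ * ‖Bx z‖ ≤ (|Ca| * rho γ z ^ e * sfun z ^ γ) * (N * ‖w‖) :=
            mul_le_mul h2 h3 (norm_nonneg _) h4
      _ = h z * ‖w‖ := by rw [hh]; ring
    calc ‖aa γ b (z₀ + w) • Bx (z₀ + w)‖ ≤ h z * ‖w‖ := hb1
    _ ≤ c * ‖w‖ := mul_le_mul_of_nonneg_right hz' (norm_nonneg _)
  set D2 : GSp N l →L[ℝ] GSp N l →L[ℝ] ℝ :=
    bb γ b z₀ • By + Dbb.smulRight (By z₀) with hD2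
  refine ⟨D2, ?_, ?_⟩
  · have h2 : HasFDerivAt (fun z : GSp N l => bb γ b z • By z)
        (bb γ b z₀ • By + Dbb.smulRight (By z₀)) z₀ := by
      have := hbb.smul (By (N:=N) (l:=l)).hasFDerivAt
      convert (config := {transparency := .default, preTransparency := .instances}) this using 1
    have h3 := hA.add h2
    rw [zero_add] at h3
    exact h3
  · have hDi : ∀ i : Fin N, D2 (ex i) (ex i) = 0 := by
      intro i
      simp [hD2, ContinuousLinearMap.add_apply, ContinuousLinearMap.smul_apply,
        ContinuousLinearMap.smulRight_apply, ex]
    rw [Finset.sum_congr rfl (fun i _ => hDi i), Finset.sum_const, hsγ0]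
    simp

lemma exists_D2 (hγ : 0 < γ) {z₀ : GSp N l} (hz : 0 < rho γ z₀) :
    ∃ D2 : GSp N l →L[ℝ] GSp N l →L[ℝ] ℝ,
      HasFDerivAt (Dphi γ b (N:=N) (l:=l)) D2 z₀ ∧
      (∑ i, D2 (ex i) (ex i)) + sfun z₀ ^ γ * ∑ j, D2 (ey j) (ey j)
        = -(b * ((N + (1+γ)*l : ℝ) - 2 - b) * (1/(1+γ)^2)) * sfun z₀ ^ γ
          * rho γ z₀ ^ (-(b/(2+2*γ)) - 1) := by
  rcases (sfun_nonneg z₀).lt_or_eq with h | h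
  · exact exists_D2_spos hγ hz h
  · exact exists_D2_szero hγ hz h.symm


lemma isBounded_sublevel (hγ : 0 < γ) (R : ℝ) :
    Bornology.IsBounded {z : GSp N l | gdist γ z ≤ R} := by
  rw [isBounded_iff_forall_norm_le]
  set R' : ℝ := max R 0 with hR'
  have hR'0 : 0 ≤ R' := le_max_right _ _
  set C : ℝ := R' ^ (2+2*γ) with hC
  have hC0 : 0 ≤ C := Real.rpow_nonneg hR'0 _
  have h1γ : (0:ℝ) < 1+γ := by linarith
  set Cs : ℝ := (C * (1+γ)^2) ^ (1/(1+γ)) with hCs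
  have hCs0 : 0 ≤ Cs := Real.rpow_nonneg (by positivity) _
  refine ⟨max (Real.sqrt Cs) (Real.sqrt C), ?_⟩
  intro z hz
  simp only [Set.mem_setOf_eq] at hz
  have hgz : gdist γ z ≤ R' := le_trans hz (le_max_left _ _)
  have hrz : rho γ z ≤ C := by
    rw [← gdist_rpow hγ z, hC]
    exact Real.rpow_le_rpow (gdist_nonneg hγ z) hgz (by positivity)
  have hsz : sfun z ≤ Cs := by
    have h2 : (1/(1+γ)^2) * sfun z ^ (1+γ) ≤ C := by
      have := tfun_nonneg z
      rw [rho] at hrz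
      linarith
    have h3 : sfun z ^ (1+γ) ≤ C * (1+γ)^2 := by
      have h4 : (0:ℝ) < (1+γ)^2 := by positivity
      rw [div_mul_eq_mul_div, one_mul, div_le_iff₀ h4] at h2
      linarith [h2]
    calc sfun z = (sfun z ^ (1+γ)) ^ (1/(1+γ)) := by
          rw [← Real.rpow_mul (sfun_nonneg z), mul_one_div, div_self (by positivity : (1:ℝ)+γ ≠ 0),
            Real.rpow_one]
    _ ≤ Cs := Real.rpow_le_rpow (Real.rpow_nonneg (sfun_nonneg z) _) h3 (by positivity)
  have htz : tfun z ≤ C := by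
    have h2 : (0:ℝ) ≤ (1/(1+γ)^2) * sfun z ^ (1+γ) := by
      have := Real.rpow_nonneg (sfun_nonneg z) (1+γ)
      positivity
    rw [rho] at hrz
    linarith
  have hx : ∀ i, |z.1 i| ≤ Real.sqrt Cs := by
    intro i
    have h2 : (z.1 i)^2 ≤ sfun z :=
      Finset.single_le_sum (f := fun i => (z.1 i)^2) (fun i _ => sq_nonneg _) (Finset.mem_univ i)
    rw [← Real.sqrt_sq_eq_abs]
    exact Real.sqrt_le_sqrt (by linarith)
  have hy : ∀ j, |z.2 j| ≤ Real.sqrt C := by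
    intro j
    have h2 : (z.2 j)^2 ≤ tfun z :=
      Finset.single_le_sum (f := fun j => (z.2 j)^2) (fun j _ => sq_nonneg _) (Finset.mem_univ j)
    rw [← Real.sqrt_sq_eq_abs]
    exact Real.sqrt_le_sqrt (by linarith)
  rw [Prod.norm_def]
  apply max_le
  · apply le_trans _ (le_max_left _ _)
    apply (pi_norm_le_iff_of_nonneg (Real.sqrt_nonneg _)).mpr
    intro i
    rw [Real.norm_eq_abs]
    exact hx i
  · apply le_trans _ (le_max_right _ _)
    apply (pi_norm_le_iff_of_nonneg (Real.sqrt_nonneg _)).mpr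
    intro j
    rw [Real.norm_eq_abs]
    exact hy j

end MPaux

open MPaux in
/-- weighted maximum-principle comparison on an unbounded exterior domain
(case `0 < b < N_γ − 2`). -/
theorem maximum_principle_unbounded_weighted {N l : ℕ} (γ R₀ b : ℝ) (hγ : 0 < γ)
    (hR₀ : 0 < R₀) (hb0 : 0 < b) (hb : b < Ngamma N l γ - 2)
    (Ω : Set (GSp N l)) (hopen : IsOpen Ω) (hconn : IsConnected Ω)
    (hunbdd : ¬ Bornology.IsBounded Ω)
    (hΩ : Ω ⊆ {z | R₀ < gdist γ z})
    (ω c : GSp N l → ℝ) (hω : ContDiff ℝ 2 ω)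
    (hsub : ∀ z ∈ Ω, -(grushin γ ω z) + c z * ω z ≤ 0)
    (hbdry : ∀ z ∈ frontier Ω, ω z ≤ 0)
    (hc : ∀ z : GSp N l, R₀ ≤ gdist γ z →
      -(b * (Ngamma N l γ - 2 - b) * xnorm z.1 ^ (2 * γ)) /
        ((1 + γ) ^ 2 * gdist γ z ^ (2 + 2 * γ)) < c z)
    (hlim : Tendsto (fun z => ω z * gdist γ z ^ b) (comap (gdist γ) atTop) (nhds 0)) :
    ∀ z ∈ Ω, ω z ≤ 0 := by
  by_contra hcon
  push_neg at hcon
  obtain ⟨z₁, hz₁Ω, hz₁⟩ := hcon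
  have h1γ : (0:ℝ) < 1 + γ := by linarith
  set w : GSp N l → ℝ := fun z => ω z * gdist γ z ^ b with hw
  have hgd1 : 0 < gdist γ z₁ := lt_trans hR₀ (hΩ hz₁Ω)
  have hw1 : 0 < w z₁ := mul_pos hz₁ (Real.rpow_pos_of_pos hgd1 b)
  set ε : ℝ := w z₁ / 2 with hε
  have hεpos : 0 < ε := by positivity
  -- extract R from the limit hypothesis
  obtain ⟨R, hR⟩ : ∃ R, ∀ z : GSp N l, R ≤ gdist γ z → |w z| < ε := by
    have h1 := hlim (Metric.ball_mem_nhds 0 hεpos)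
    rw [Filter.mem_map, Filter.mem_comap] at h1
    obtain ⟨S, hS, hsub'⟩ := h1
    rw [mem_atTop_sets] at hS
    obtain ⟨R, hR⟩ := hS
    refine ⟨R, fun z hz => ?_⟩
    have h2 : z ∈ gdist γ ⁻¹' S := hR _ hz
    have h3 := hsub' h2
    simpa [Real.dist_eq] using h3
  set R₂ : ℝ := max R (gdist γ z₁) with hR₂
  -- the compact set
  set K : Set (GSp N l) := closure Ω ∩ {z | gdist γ z ≤ R₂} with hK
  have hKclosed : IsClosed K :=
    isClosed_closure.inter (isClosed_le (continuous_gdist hγ) continuous_const)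
  have hKbdd : Bornology.IsBounded K :=
    (isBounded_sublevel hγ R₂).subset (Set.inter_subset_right)
  have hKcompact : IsCompact K := Metric.isCompact_of_isClosed_isBounded hKclosed hKbdd
  have hz₁K : z₁ ∈ K := ⟨subset_closure hz₁Ω, show gdist γ z₁ ≤ R₂ from le_max_right _ _⟩
  have hclosΩ : closure Ω ⊆ {z | R₀ ≤ gdist γ z} := by
    apply closure_minimal _ (isClosed_le continuous_const (continuous_gdist hγ))
    exact fun z hz => show R₀ ≤ gdist γ z from le_of_lt (hΩ hz)
  have hcontw : ContinuousOn w K := by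
    intro z hz
    apply ContinuousAt.continuousWithinAt
    apply (hω.continuous.continuousAt).mul
    apply ContinuousAt.rpow_const ((continuous_gdist hγ).continuousAt)
    left
    exact ne_of_gt (lt_of_lt_of_le hR₀ (hclosΩ hz.1))
  obtain ⟨z₀, hz₀K, hmax⟩ := hKcompact.exists_isMaxOn ⟨z₁, hz₁K⟩ hcontw
  set M : ℝ := w z₀ with hM
  have hM1 : w z₁ ≤ M := hmax hz₁K
  have hMpos : 0 < M := lt_of_lt_of_le hw1 hM1
  have hεM : ε < M := by
    rw [hε]
    linarith
  -- z₀ is in the open region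
  have hgz₀ : gdist γ z₀ < R₂ := by
    by_contra h
    push_neg at h
    have h2 := hR z₀ (le_trans (le_max_left _ _) h)
    have h3 : M < ε := lt_of_le_of_lt (le_abs_self _) h2
    linarith
  have hz₀Ω : z₀ ∈ Ω := by
    have h1 : z₀ ∈ closure Ω := hz₀K.1
    rcases (em (z₀ ∈ Ω)) with h | h
    · exact h
    · exfalso
      have h2 : z₀ ∈ frontier Ω := by
        rw [hopen.frontier_eq]
        exact ⟨h1, h⟩
      have h3 := hbdry z₀ h2
      have h4 : w z₀ ≤ 0 :=
        mul_nonpos_of_nonpos_of_nonneg h3 (Real.rpow_nonneg (gdist_nonneg hγ z₀) b)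
      linarith
  have hgd₀ : R₀ < gdist γ z₀ := hΩ hz₀Ω
  have hgd₀pos : 0 < gdist γ z₀ := lt_trans hR₀ hgd₀
  have hρ₀pos : 0 < rho γ z₀ := rho_pos hγ hgd₀pos
  -- global bound w ≤ M on closure Ω
  have hbound : ∀ z ∈ closure Ω, w z ≤ M := by
    intro z hz
    rcases le_or_gt (gdist γ z) R₂ with h | h
    · exact hmax ⟨hz, h⟩
    · have h2 := hR z (le_trans (le_max_left _ _) (le_of_lt h))
      have h3 : w z < ε := lt_of_le_of_lt (le_abs_self _) h2
      linarith
  -- the comparison function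
  set pp : ℝ := -(b/(2+2*γ)) with hpp
  set φ : GSp N l → ℝ := fun z => rho γ z ^ pp with hφ
  have hφg : ∀ z : GSp N l, φ z = gdist γ z ^ (-b) := by
    intro z
    rw [hφ, gdist_eq hγ, ← Real.rpow_mul (rho_nonneg hγ z)]
    congr 1
    rw [hpp]; ring
  have hφpos : ∀ z : GSp N l, 0 < gdist γ z → 0 < φ z := by
    intro z hz
    rw [hφg]
    exact Real.rpow_pos_of_pos hz _
  set ψ : GSp N l → ℝ := fun z => ω z - M * φ z with hψ
  have hgg₀ : gdist γ z₀ ^ b * gdist γ z₀ ^ (-b) = 1 := by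
    rw [← Real.rpow_add hgd₀pos]; simp
  have hψ0 : ψ z₀ = 0 := by
    rw [hψ]
    simp only
    rw [hφg, hM, hw]
    simp only
    rw [mul_assoc, hgg₀, mul_one]
    ring
  have hψmax : IsLocalMax ψ z₀ := by
    have h1 : ∀ᶠ z in 𝓝 z₀, z ∈ Ω := hopen.mem_nhds hz₀Ω
    filter_upwards [h1] with z hz
    rw [hψ0]
    simp only [hψ]
    have hgz : 0 < gdist γ z := lt_trans hR₀ (hΩ hz)
    have h2 : w z ≤ M := hbound z (subset_closure hz)
    have h3 : ω z ≤ M * φ z := by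
      rw [hφg]
      have h4 := mul_le_mul_of_nonneg_right h2
        (le_of_lt (Real.rpow_pos_of_pos hgz (-b)))
      have h5 : gdist γ z ^ b * gdist γ z ^ (-b) = 1 := by
        rw [← Real.rpow_add hgz]; simp
      rw [hw] at h4
      simp only at h4
      rw [mul_assoc, h5, mul_one] at h4
      exact h4
    linarith
  -- derivatives
  have hUopen : IsOpen {z : GSp N l | 0 < rho γ z} :=
    isOpen_lt continuous_const (continuous_rho hγ)
  obtain ⟨D2, hD2d, hD2sum⟩ := exists_D2 (b := b) hγ hρ₀pos
  set G : GSp N l →L[ℝ] GSp N l →L[ℝ] ℝ := fderiv ℝ (fderiv ℝ ω) z₀ with hG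
  set F : GSp N l → (GSp N l →L[ℝ] ℝ) := fun z => fderiv ℝ ω z - M • Dphi γ b z with hF
  have hFd : ∀ᶠ z in 𝓝 z₀, HasFDerivAt ψ (F z) z := by
    filter_upwards [hUopen.mem_nhds hρ₀pos] with z hz
    have h1 : HasFDerivAt ω (fderiv ℝ ω z) z :=
      (hω.differentiable (by norm_num)).differentiableAt.hasFDerivAt
    have h2 : HasFDerivAt (fun z => M * φ z) (M • Dphi γ b z) z :=
      (hasFDerivAt_phi hγ hz).const_mul M
    exact h1.sub h2
  have hFd2 : HasFDerivAt F (G - M • D2) z₀ := by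
    have h1 : HasFDerivAt (fderiv ℝ ω) G z₀ := by
      have h2 : ContDiff ℝ 1 (fderiv ℝ ω) := hω.fderiv_right (by norm_num)
      exact (h2.differentiable (by norm_num)).differentiableAt.hasFDerivAt
    have h3 : HasFDerivAt (fun z => M • Dphi γ b z) (M • D2) z₀ := hD2d.const_smul M
    exact h1.sub h3
  have hkey : ∀ v : GSp N l, G v v ≤ M * (D2 v v) := by
    intro v
    have h1 := hessian_nonpos_of_isLocalMax v hψmax hFd hFd2
    simp only [ContinuousLinearMap.sub_apply, ContinuousLinearMap.smul_apply,
      ContinuousLinearMap.coe_smul', Pi.smul_apply, smul_eq_mul] at h1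
    linarith
  -- identify deriv2 with G
  have hderiv2 : ∀ v : GSp N l, deriv2 ω z₀ v = G v v := by
    intro v
    rw [deriv2, iteratedFDeriv_two_apply]
    simp [hG]
  have hxnorm : xnorm z₀.1 ^ (2*γ) = sfun z₀ ^ γ := by
    rw [xnorm_rpow]
    rfl
  have hsγnn : 0 ≤ sfun z₀ ^ γ := Real.rpow_nonneg (sfun_nonneg z₀) _
  have hgr : grushin γ ω z₀ ≤ M * (-(b * (Ngamma N l γ - 2 - b) * (1/(1+γ)^2)) * sfun z₀ ^ γ
      * rho γ z₀ ^ (pp - 1)) := by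
    have h1 : grushin γ ω z₀ = (∑ i, G (ex i) (ex i)) +
        sfun z₀ ^ γ * ∑ j, G (ey j) (ey j) := by
      rw [grushin, hxnorm]
      congr 1
      · exact Finset.sum_congr rfl fun i _ => hderiv2 (ex i)
      · congr 1
        exact Finset.sum_congr rfl fun j _ => hderiv2 (ey j)
    rw [h1]
    have h2 : (∑ i, G (ex i) (ex i)) + sfun z₀ ^ γ * ∑ j, G (ey j) (ey j) ≤
        (∑ i, M * (D2 (ex i) (ex i))) + sfun z₀ ^ γ * ∑ j, M * (D2 (ey j) (ey j)) := by
      apply add_le_add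
      · exact Finset.sum_le_sum fun i _ => hkey (ex i)
      · apply mul_le_mul_of_nonneg_left _ hsγnn
        exact Finset.sum_le_sum fun j _ => hkey (ey j)
    apply le_trans h2
    rw [← Finset.mul_sum, ← Finset.mul_sum]
    have h3 : M * (∑ i, D2 (ex i) (ex i)) + sfun z₀ ^ γ * (M * ∑ j, D2 (ey j) (ey j))
        = M * ((∑ i, D2 (ex i) (ex i)) + sfun z₀ ^ γ * ∑ j, D2 (ey j) (ey j)) := by ring
    rw [h3, hD2sum]
    apply le_of_eq
    congr 1
  -- conclude
  have hww : ω z₀ = M * φ z₀ := by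
    have h := hψ0
    rw [hψ] at h
    simp only at h
    linarith
  set K' : ℝ := Ngamma N l γ - 2 - b with hK'
  set s' : ℝ := sfun z₀ ^ γ with hs'
  set ρ' : ℝ := rho γ z₀ with hρ'
  set X : ℝ := rho γ z₀ ^ pp with hX
  set Y : ℝ := rho γ z₀ ^ (pp - 1) with hY
  have hXpos : 0 < X := Real.rpow_pos_of_pos hρ₀pos _
  have hYpos : 0 < Y := Real.rpow_pos_of_pos hρ₀pos _
  have hXY : X = Y * ρ' := by
    rw [hX, hY, hρ', ← Real.rpow_add_one (ne_of_gt hρ₀pos), sub_add_cancel]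
  have hsubz := hsub z₀ hz₀Ω
  have hchain : c z₀ * (M * X) ≤ M * (-(b * K' * (1/(1+γ)^2)) * s' * Y) := by
    have h1 : c z₀ * ω z₀ ≤ grushin γ ω z₀ := by linarith [hsubz]
    rw [hww, hφ] at h1
    exact le_trans h1 hgr
  have hstep1 : c z₀ * X ≤ -(b * K' * (1/(1+γ)^2)) * s' * Y := by
    have e : c z₀ * (M * X) = M * (c z₀ * X) := by ring
    rw [e] at hchain
    exact le_of_mul_le_mul_left hchain hMpos
  have hcc := hc z₀ (le_of_lt hgd₀)
  rw [hxnorm, gdist_rpow hγ] at hcc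
  -- turn hcc into the same form
  have hden : (0:ℝ) < (1+γ)^2 * ρ' := by positivity
  rw [div_lt_iff₀ hden] at hcc
  have h1 := mul_lt_mul_of_pos_right hcc hYpos
  have h2 : c z₀ * ((1+γ)^2 * ρ') * Y = (1+γ)^2 * (c z₀ * X) := by
    rw [hXY]; ring
  have h3 : (1+γ)^2 * (c z₀ * X) ≤ (1+γ)^2 * (-(b * K' * (1/(1+γ)^2)) * s' * Y) :=
    mul_le_mul_of_nonneg_left hstep1 (by positivity)
  have h4 : (1+γ)^2 * (-(b * K' * (1/(1+γ)^2)) * s' * Y) = -(b * K' * s') * Y := by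
    field_simp
  rw [h2] at h1
  rw [h4] at h3
  linarith
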